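/- Let q be a prime power, and let n, k, d be positive integers with 1 ≤ k ≤ n. If q^{2n−k} − 1 < q^{2n} / ∑_{i=0}^{d−1} C(n,i)(q²−1)^i, then there exists a k-dimensional linear subspace C ⊆ 𝔽_q^{2n} that is symplectic self-orthogonal (C ⊆ C^{⊥_S}) and such that every nonzero vector of C^{⊥_S} has symplectic weight at least d, i.e., d_S(C^{⊥_S}) ≥ d. -/

import Mathlib

open Finset
open scoped Classical

/-- Symplectic weight of a vector in `F^{2n}`, written as `Fin n → F × F`. -/
noncomputable def sympWt {F : Type} [Zero F] [DecidableEq F] {n : ℕ} (u : Fin n → F × F) : ℕ :=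
  hammingNorm u

/-- The symplectic inner product on `F^{2n}`: `⟨(a|b),(a'|b')⟩_S = ⟨a,b'⟩ - ⟨b,a'⟩`. -/
def sympInner {F : Type} [Field F] {n : ℕ} (u v : Fin n → F × F) : F :=
  ∑ i, ((u i).1 * (v i).2 - (u i).2 * (v i).1)

namespace GVaux

variable {F : Type} [Field F] {n : ℕ}

lemma sympInner_add_left (u u' v : Fin n → F × F) :
    sympInner (u + u') v = sympInner u v + sympInner u' v := by
  simp only [sympInner, Pi.add_apply, Prod.fst_add, Prod.snd_add, ← Finset.sum_add_distrib]
  exact Finset.sum_congr rfl fun i _ => by ring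

lemma sympInner_add_right (u v v' : Fin n → F × F) :
    sympInner u (v + v') = sympInner u v + sympInner u v' := by
  simp only [sympInner, Pi.add_apply, Prod.fst_add, Prod.snd_add, ← Finset.sum_add_distrib]
  exact Finset.sum_congr rfl fun i _ => by ring

lemma sympInner_smul_left (c : F) (u v : Fin n → F × F) :
    sympInner (c • u) v = c * sympInner u v := by
  simp only [sympInner, Pi.smul_apply, Prod.smul_fst, Prod.smul_snd, smul_eq_mul,
    Finset.mul_sum]
  exact Finset.sum_congr rfl fun i _ => by ring

lemma sympInner_smul_right (c : F) (u v : Fin n → F × F) :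
    sympInner u (c • v) = c * sympInner u v := by
  simp only [sympInner, Pi.smul_apply, Prod.smul_fst, Prod.smul_snd, smul_eq_mul,
    Finset.mul_sum]
  exact Finset.sum_congr rfl fun i _ => by ring

lemma sympInner_self (u : Fin n → F × F) : sympInner u u = 0 := by
  simp [sympInner, mul_comm]

lemma sympInner_anti (u v : Fin n → F × F) : sympInner u v = -sympInner v u := by
  simp only [sympInner, ← Finset.sum_neg_distrib]
  exact Finset.sum_congr rfl fun i _ => by ring

lemma sympInner_sub_right (u v v' : Fin n → F × F) :
    sympInner u (v - v') = sympInner u v - sympInner u v' := by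
  simp only [sympInner, Pi.sub_apply, Prod.fst_sub, Prod.snd_sub, ← Finset.sum_sub_distrib]
  exact Finset.sum_congr rfl fun i _ => by ring

variable (F n) in
/-- The symplectic form as a bilinear form. -/
noncomputable def Phi : LinearMap.BilinForm F (Fin n → F × F) :=
  LinearMap.mk₂ F sympInner sympInner_add_left sympInner_smul_left
    sympInner_add_right sympInner_smul_right

@[simp] lemma Phi_apply (u v : Fin n → F × F) : Phi F n u v = sympInner u v := rfl

lemma Phi_alt : (Phi F n).IsAlt := fun u => sympInner_self u

lemma Phi_refl : (Phi F n).IsRefl := Phi_alt.isRefl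

lemma Phi_nondeg : (Phi F n).Nondegenerate := by
  refine (fun hL => ⟨hL, fun u hu => hL u fun v => Phi_refl _ _ (hu v)⟩) ?_
  intro u hu
  funext i
  have h1 := hu (Pi.single i ((0 : F), (1 : F)))
  have h2 := hu (Pi.single i ((1 : F), (0 : F)))
  simp only [Phi_apply, sympInner] at h1 h2
  rw [Finset.sum_eq_single i ?j1 ?j2] at h1
  rw [Finset.sum_eq_single i ?j3 ?j4] at h2
  case j1 => intro j _ hj; rw [Pi.single_eq_of_ne hj]; simp
  case j2 => intro h; exact absurd (Finset.mem_univ i) h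
  case j3 => intro j _ hj; rw [Pi.single_eq_of_ne hj]; simp
  case j4 => intro h; exact absurd (Finset.mem_univ i) h
  simp only [Pi.single_eq_same] at h1 h2
  have e1 : (u i).1 = 0 := by simpa using h1
  have e2 : (u i).2 = 0 := by simpa using h2
  simp [Prod.ext_iff, e1, e2]

variable (F) in
/-- Embedding of `F^k` into the first components of the first `k` coordinates. -/
noncomputable def emb (k : ℕ) : (Fin k → F) →ₗ[F] (Fin n → F × F) where
  toFun a i := (if h' : (i : ℕ) < k then a ⟨i, h'⟩ else 0, 0)
  map_add' a b := by
    funext i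
    by_cases h' : (i : ℕ) < k <;> simp [h', Prod.ext_iff]
  map_smul' c a := by
    funext i
    by_cases h' : (i : ℕ) < k <;> simp [h', Prod.ext_iff]

lemma emb_inj {k : ℕ} (hkn : k ≤ n) : Function.Injective (emb F (n := n) k) := by
  intro a b hab
  funext j
  have := congrFun hab ⟨(j : ℕ), lt_of_lt_of_le j.2 hkn⟩
  simp only [emb, LinearMap.coe_mk, AddHom.coe_mk] at this
  rw [dif_pos j.2, dif_pos j.2] at this
  simpa [Prod.ext_iff, Fin.eta] using this

lemma emb_orth {k : ℕ} (a b : Fin k → F) :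
    sympInner (emb F (n := n) k a) (emb F (n := n) k b) = 0 := by
  simp [sympInner, emb]

variable (F n) in
/-- The symplectic group as a subgroup of the units of the endomorphism monoid. -/
noncomputable def Sp : Subgroup ((Fin n → F × F) →ₗ[F] (Fin n → F × F))ˣ where
  carrier := { g | ∀ u v, sympInner (g.1 u) (g.1 v) = sympInner u v }
  one_mem' := by intro u v; simp
  mul_mem' := by
    intro g h hg hh u v
    simp only [Units.val_mul, Module.End.mul_apply]
    rw [hg, hh]
  inv_mem' := by
    intro g hg u v
    have key : ∀ w, g.1 (g⁻¹.1 w) = w := by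
      intro w
      rw [← Module.End.mul_apply, ← Units.val_mul, mul_inv_cancel]
      simp
    calc sympInner (g⁻¹.1 u) (g⁻¹.1 v)
        = sympInner (g.1 (g⁻¹.1 u)) (g.1 (g⁻¹.1 v)) := (hg _ _).symm
      _ = sympInner u v := by rw [key, key]

/-- Application of an element of the symplectic group. -/
noncomputable def ap (g : Sp F n) (v : Fin n → F × F) : Fin n → F × F := g.1.1 v

lemma ap_one (v : Fin n → F × F) : ap (1 : Sp F n) v = v := rfl

lemma ap_mul (g h : Sp F n) (v : Fin n → F × F) : ap (g * h) v = ap g (ap h v) := rfl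

lemma ap_inv_ap (g : Sp F n) (v : Fin n → F × F) : ap g⁻¹ (ap g v) = v := by
  rw [← ap_mul, inv_mul_cancel, ap_one]

lemma ap_ap_inv (g : Sp F n) (v : Fin n → F × F) : ap g (ap g⁻¹ v) = v := by
  rw [← ap_mul, mul_inv_cancel, ap_one]

lemma ap_sympInner (g : Sp F n) (u v : Fin n → F × F) :
    sympInner (ap g u) (ap g v) = sympInner u v := g.2 u v

lemma ap_inj (g : Sp F n) : Function.Injective (ap g) := by
  intro u v h
  have := congrArg (ap g⁻¹) h
  rwa [ap_inv_ap, ap_inv_ap] at this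

lemma ap_ne_zero (g : Sp F n) {v : Fin n → F × F} (hv : v ≠ 0) : ap g v ≠ 0 := by
  intro h
  apply hv
  have : ap g v = ap g 0 := by
    rw [h]; show (0 : Fin n → F × F) = g.1.1 0; rw [map_zero]
  exact ap_inj g this

lemma ap_inv_eq_iff (g : Sp F n) (x y : Fin n → F × F) :
    ap g⁻¹ x = y ↔ ap g y = x := by
  constructor
  · rintro rfl; exact ap_ap_inv g x
  · rintro rfl; exact ap_inv_ap g y

/-- Symplectic transvection as a linear map. -/
noncomputable def tvL (u : Fin n → F × F) (c : F) :
    (Fin n → F × F) →ₗ[F] (Fin n → F × F) where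
  toFun v := v + (c * sympInner v u) • u
  map_add' v w := by
    rw [sympInner_add_left, mul_add, add_smul]
    abel
  map_smul' a v := by
    dsimp only [RingHom.id_apply]
    rw [sympInner_smul_left, smul_add, smul_smul]
    module

lemma tvL_apply (u : Fin n → F × F) (c : F) (v : Fin n → F × F) :
    tvL u c v = v + (c * sympInner v u) • u := rfl

lemma tvL_tvL (u : Fin n → F × F) (c : F) (v : Fin n → F × F) :
    tvL u c (tvL u (-c) v) = v := by
  simp only [tvL_apply, sympInner_add_left, sympInner_smul_left, sympInner_self, mul_zero,
    add_zero]
  module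

/-- Symplectic transvection as a unit. -/
noncomputable def tv (u : Fin n → F × F) (c : F) :
    ((Fin n → F × F) →ₗ[F] (Fin n → F × F))ˣ where
  val := tvL u c
  inv := tvL u (-c)
  val_inv := by
    refine LinearMap.ext fun v => ?_
    simp only [Module.End.mul_apply, Module.End.one_apply]
    exact tvL_tvL u c v
  inv_val := by
    refine LinearMap.ext fun v => ?_
    simp only [Module.End.mul_apply, Module.End.one_apply]
    have := tvL_tvL u (-c) v
    rwa [neg_neg] at this

lemma tv_mem (u : Fin n → F × F) (c : F) : tv u c ∈ Sp F n := by
  intro v w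
  show sympInner (tvL u c v) (tvL u c w) = sympInner v w
  simp only [tvL_apply, sympInner_add_left, sympInner_add_right, sympInner_smul_left,
    sympInner_smul_right, sympInner_self, mul_zero, add_zero]
  rw [sympInner_anti u w]
  ring

lemma exists_step {x y : Fin n → F × F} (h : sympInner y x ≠ 0) :
    ∃ g : Sp F n, ap g y = x := by
  refine ⟨⟨tv (x - y) (sympInner y x)⁻¹, tv_mem _ _⟩, ?_⟩
  show tvL (x - y) (sympInner y x)⁻¹ y = x
  rw [tvL_apply, sympInner_sub_right, sympInner_self, sub_zero, inv_mul_cancel₀ h, one_smul]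
  abel

lemma exists_pairing {y : Fin n → F × F} (hy : y ≠ 0) :
    ∃ a, sympInner y a ≠ 0 := by
  by_contra h
  push_neg at h
  exact hy (Phi_nondeg.1 y h)

lemma sp_transitive {x y : Fin n → F × F} (hx : x ≠ 0) (hy : y ≠ 0) :
    ∃ g : Sp F n, ap g y = x := by
  by_cases hxy : sympInner y x ≠ 0
  · exact exists_step hxy
  push_neg at hxy
  by_cases heq : x = y
  · exact ⟨1, by rw [ap_one, heq]⟩
  obtain ⟨a, ha⟩ := exists_pairing hy
  obtain ⟨b, hb⟩ := exists_pairing hx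
  have hbx : sympInner b x ≠ 0 := by
    rw [sympInner_anti]; exact neg_ne_zero.mpr hb
  obtain ⟨z, hyz, hzx⟩ : ∃ z, sympInner y z ≠ 0 ∧ sympInner z x ≠ 0 := by
    by_cases h1 : sympInner a x ≠ 0
    · exact ⟨a, ha, h1⟩
    by_cases h2 : sympInner y b ≠ 0
    · exact ⟨b, h2, hbx⟩
    push_neg at h1 h2
    refine ⟨a + b, ?_, ?_⟩
    · rw [sympInner_add_right, h2, add_zero]; exact ha
    · rw [sympInner_add_left, h1, zero_add]; exact hbx
  obtain ⟨g₁, hg₁⟩ := exists_step hyz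
  obtain ⟨g₂, hg₂⟩ := exists_step hzx
  exact ⟨g₂ * g₁, by rw [ap_mul, hg₁, hg₂]⟩

end GVaux

section Counting

open GVaux

/-- Counting functions with prescribed support. -/
lemma card_support_filter_le {A : Type} [Fintype A] [DecidableEq A] [Zero A] {n : ℕ}
    (s : Finset (Fin n)) :
    (Finset.univ.filter fun x : Fin n → A => ∀ j, x j ≠ 0 ↔ j ∈ s).card ≤
      (Fintype.card A - 1) ^ s.card := by
  have hcard : (Finset.univ.filter fun y : {j // j ∈ s} → A => ∀ j, y j ≠ 0).card =
      (Fintype.card A - 1) ^ s.card := by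
    rw [← Fintype.card_subtype]
    rw [Fintype.card_congr (Equiv.subtypePiEquivPi (p := fun _ b => b ≠ 0))]
    rw [Fintype.card_pi]
    have : ∀ j : {j // j ∈ s}, Fintype.card {a : A // a ≠ 0} = Fintype.card A - 1 := by
      intro j
      rw [Fintype.card_subtype]
      rw [Finset.filter_ne' Finset.univ 0, Finset.card_erase_of_mem (Finset.mem_univ _),
        Finset.card_univ]
    rw [Finset.prod_congr rfl (fun j _ => this j), Finset.prod_const, Finset.card_univ,
      Fintype.card_coe]
  rw [← hcard]
  apply Finset.card_le_card_of_injOn (fun x (j : {j // j ∈ s}) => x j.1)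
  · intro x hx
    simp only [Finset.coe_filter, Set.mem_setOf_eq, Finset.mem_filter, Finset.mem_univ,
      true_and] at hx ⊢
    exact fun j => (hx j.1).mpr j.2
  · intro x hx y hy hxy
    simp only [Finset.coe_filter, Set.mem_setOf_eq, Finset.mem_univ, true_and] at hx hy
    funext j
    by_cases hj : j ∈ s
    · exact congrFun hxy ⟨j, hj⟩
    · have hx0 : x j = 0 := by
        by_contra h; exact hj ((hx j).mp h)
      have hy0 : y j = 0 := by
        by_contra h; exact hj ((hy j).mp h)
      rw [hx0, hy0]

lemma card_ball_le {A : Type} [Fintype A] [DecidableEq A] [Zero A] (n d : ℕ) :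
    (Finset.univ.filter fun x : Fin n → A => hammingNorm x < d).card ≤
      ∑ i ∈ Finset.range d, n.choose i * (Fintype.card A - 1) ^ i := by
  have hsub : (Finset.univ.filter fun x : Fin n → A => hammingNorm x < d) ⊆
      (Finset.range d).biUnion (fun i =>
        Finset.univ.filter fun x : Fin n → A => hammingNorm x = i) := by
    intro x hx
    simp only [Finset.mem_filter, Finset.mem_univ, true_and] at hx
    exact Finset.mem_biUnion.mpr ⟨hammingNorm x, Finset.mem_range.mpr hx,
      Finset.mem_filter.mpr ⟨Finset.mem_univ _, rfl⟩⟩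
  refine le_trans (le_trans (Finset.card_le_card hsub) (Finset.card_biUnion_le)) ?_
  apply Finset.sum_le_sum
  intro i _
  have hsub2 : (Finset.univ.filter fun x : Fin n → A => hammingNorm x = i) ⊆
      (Finset.powersetCard i (Finset.univ : Finset (Fin n))).biUnion (fun s =>
        Finset.univ.filter fun x : Fin n → A => ∀ j, x j ≠ 0 ↔ j ∈ s) := by
    intro x hx
    simp only [Finset.mem_filter, Finset.mem_univ, true_and] at hx
    refine Finset.mem_biUnion.mpr ⟨Finset.univ.filter fun j => x j ≠ 0, ?_, ?_⟩
    · exact Finset.mem_powersetCard.mpr ⟨Finset.subset_univ _, hx⟩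
    · simp
  refine le_trans (le_trans (Finset.card_le_card hsub2) (Finset.card_biUnion_le)) ?_
  calc ∑ s ∈ Finset.powersetCard i (Finset.univ : Finset (Fin n)),
        (Finset.univ.filter fun x : Fin n → A => ∀ j, x j ≠ 0 ↔ j ∈ s).card
      ≤ ∑ s ∈ Finset.powersetCard i (Finset.univ : Finset (Fin n)),
        (Fintype.card A - 1) ^ i := by
        apply Finset.sum_le_sum
        intro s hs
        have := card_support_filter_le (A := A) s
        rwa [(Finset.mem_powersetCard.mp hs).2] at this
    _ = n.choose i * (Fintype.card A - 1) ^ i := by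
        rw [Finset.sum_const, Finset.card_powersetCard, Finset.card_univ, Fintype.card_fin,
          smul_eq_mul]

end Counting

open GVaux

set_option maxHeartbeats 1000000

noncomputable instance spFintype (F : Type) [Field F] [Fintype F] (n : ℕ) :
    Fintype (Sp F n) :=
  Fintype.ofInjective (fun g : Sp F n => ⇑g.1.1)
    (fun _ _ hf => Subtype.ext (Units.ext (DFunLike.coe_injective hf)))

/-- Let `q` be a prime power (realized as the cardinality of a finite field
`F`) and `n, k, d` positive integers with `1 ≤ k ≤ n`. If
`q^{2n-k} - 1 < q^{2n} / ∑_{i=0}^{d-1} C(n,i)(q²-1)^i`, then there exists a `k`-dimensional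
symplectic self-orthogonal subspace `C` of `F^{2n}` such that every nonzero vector of the
symplectic dual `C^{⊥_S}` has symplectic weight at least `d`. -/
theorem quantum_gv_bound_basic
    (q : ℕ) (F : Type) [Field F] [Fintype F] [DecidableEq F] (hF : Fintype.card F = q)
    (n k d : ℕ) (hn : 0 < n) (hd : 0 < d) (hk1 : 1 ≤ k) (hkn : k ≤ n)
    (hineq : (q : ℝ) ^ (2 * n - k) - 1 <
      (q : ℝ) ^ (2 * n) /
        (∑ i ∈ Finset.range d, (n.choose i : ℝ) * ((q : ℝ) ^ 2 - 1) ^ i)) :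
    ∃ C : Submodule F (Fin n → F × F), Module.finrank F C = k ∧
      (∀ x ∈ C, ∀ y ∈ C, sympInner x y = 0) ∧
      ∀ x : Fin n → F × F, (∀ c ∈ C, sympInner x c = 0) → x ≠ 0 → d ≤ sympWt x := by
  classical
  have hq2 : 2 ≤ q := hF ▸ Fintype.one_lt_card
  set a := q ^ (2 * n - k) with ha_def
  set b := q ^ (2 * n) with hb_def
  set S := ∑ i ∈ Finset.range d, n.choose i * (q ^ 2 - 1) ^ i with hS_def
  have hq2_1 : 1 ≤ q ^ 2 := Nat.one_le_pow _ _ (by omega)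
  have ha1 : 1 ≤ a := Nat.one_le_pow _ _ (by omega)
  have hScast : (S : ℝ) = ∑ i ∈ Finset.range d, (n.choose i : ℝ) * ((q : ℝ) ^ 2 - 1) ^ i := by
    rw [hS_def, Nat.cast_sum]
    refine Finset.sum_congr rfl fun i _ => ?_
    push_cast [Nat.cast_sub hq2_1]
    ring
  have hq1R : (1 : ℝ) ≤ (q : ℝ) := by exact_mod_cast le_trans one_le_two hq2
  have hSposR : (0 : ℝ) < ∑ i ∈ Finset.range d, (n.choose i : ℝ) * ((q : ℝ) ^ 2 - 1) ^ i := by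
    apply Finset.sum_pos'
    · intro i _
      apply mul_nonneg (Nat.cast_nonneg _)
      apply pow_nonneg
      nlinarith
    · exact ⟨0, Finset.mem_range.mpr hd, by simp⟩
  have hnat : S * (a - 1) < b := by
    have h1 := (lt_div_iff₀ hSposR).mp hineq
    have h2 : ((S * (a - 1) : ℕ) : ℝ) < ((b : ℕ) : ℝ) := by
      rw [Nat.cast_mul, Nat.cast_sub ha1, hScast, ha_def, hb_def]
      push_cast
      calc (∑ i ∈ Finset.range d, (n.choose i : ℝ) * ((q : ℝ) ^ 2 - 1) ^ i) *
            ((q : ℝ) ^ (2 * n - k) - 1)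
          = ((q : ℝ) ^ (2 * n - k) - 1) *
            ∑ i ∈ Finset.range d, (n.choose i : ℝ) * ((q : ℝ) ^ 2 - 1) ^ i := by ring
        _ < (q : ℝ) ^ (2 * n) := h1
    exact_mod_cast h2
  have ha2 : 2 ≤ a := Nat.one_lt_pow (by omega) hq2
  have hS1 : 1 ≤ S := by
    rw [hS_def]
    refine le_trans ?_ (Finset.single_le_sum (f := fun i => n.choose i * (q ^ 2 - 1) ^ i)
      (fun i _ => Nat.zero_le _) (Finset.mem_range.mpr hd))
    simp
  -- the bad set
  set Bad := Finset.univ.filter (fun x : Fin n → F × F => x ≠ 0 ∧ hammingNorm x < d)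
    with hBad_def
  have hBadcard : Bad.card + 1 ≤ S := by
    have h0 : (0 : Fin n → F × F) ∉ Bad := by simp [hBad_def]
    have hins : insert (0 : Fin n → F × F) Bad ⊆
        Finset.univ.filter (fun x : Fin n → F × F => hammingNorm x < d) := by
      intro x hx
      rcases Finset.mem_insert.mp hx with rfl | hx
      · simp only [Finset.mem_filter, Finset.mem_univ, true_and]
        simpa using hd
      · simp only [hBad_def, Finset.mem_filter, Finset.mem_univ, true_and] at hx ⊢
        exact hx.2
    have hc := Finset.card_le_card hins
    rw [Finset.card_insert_of_notMem h0] at hc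
    refine le_trans hc ?_
    have hball := card_ball_le (A := F × F) n d
    have hcardFF : Fintype.card (F × F) = q ^ 2 := by
      rw [Fintype.card_prod, hF, sq]
    rwa [hcardFF] at hball
  have hb2 : 2 ≤ b := Nat.one_lt_pow (by omega) hq2
  have hkey : Bad.card * (a - 1) < b - 1 := by
    have h1 : Bad.card ≤ S - 1 := Nat.le_pred_of_lt (Nat.lt_of_succ_le hBadcard)
    have h2 : Bad.card * (a - 1) ≤ (S - 1) * (a - 1) := Nat.mul_le_mul_right _ h1
    have h3 : (S - 1) * (a - 1) = S * (a - 1) - (a - 1) := by rw [Nat.sub_mul, one_mul]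
    have h4 : S * (a - 1) ≤ b - 1 := Nat.le_pred_of_lt hnat
    have h5 : 1 ≤ a - 1 := Nat.le_pred_of_lt ha2
    calc Bad.card * (a - 1) ≤ S * (a - 1) - (a - 1) := h3 ▸ h2
      _ ≤ (b - 1) - (a - 1) := Nat.sub_le_sub_right h4 _
      _ ≤ (b - 1) - 1 := Nat.sub_le_sub_left h5 _
      _ < b - 1 := Nat.sub_lt (Nat.sub_pos_of_lt hb2) one_pos
  -- dimensions and cardinalities
  have hrankV : Module.finrank F (Fin n → F × F) = 2 * n := by
    rw [Module.finrank_pi_fintype]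
    have hFF : ∀ i : Fin n, Module.finrank F (F × F) = 2 := fun _ => by
      simp [Module.finrank_prod]
    rw [Finset.sum_congr rfl fun i _ => hFF i, Finset.sum_const, Finset.card_univ,
      Fintype.card_fin, smul_eq_mul]
    ring
  have hcardV : Fintype.card (Fin n → F × F) = b := by
    rw [Module.card_eq_pow_finrank (K := F), hrankV, hF, hb_def]
  -- the base point
  set e : Fin n → F × F := Pi.single ⟨0, hn⟩ ((1 : F), (0 : F)) with he_def
  have he : e ≠ 0 := by
    intro h
    have h2 := congrFun h ⟨0, hn⟩
    rw [he_def] at h2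
    simp only [Pi.single_eq_same, Pi.zero_apply, Prod.ext_iff] at h2
    exact one_ne_zero h2.1
  -- fibers all have the same cardinality
  set s0 := (Finset.univ.filter fun g : Sp F n => ap g e = e).card with hs0_def
  have hfib : ∀ x y : Fin n → F × F, x ≠ 0 → y ≠ 0 →
      (Finset.univ.filter fun g : Sp F n => ap g y = x).card = s0 := by
    intro x y hx hy
    obtain ⟨u₁, hu₁⟩ := sp_transitive hy he
    obtain ⟨u₂, hu₂⟩ := sp_transitive he hx
    rw [hs0_def]
    refine Finset.card_bij' (fun g _ => u₂ * g * u₁) (fun h _ => u₂⁻¹ * h * u₁⁻¹) ?_ ?_ ?_ ?_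
    · intro g hg
      simp only [Finset.mem_filter, Finset.mem_univ, true_and] at hg ⊢
      rw [ap_mul, ap_mul, hu₁, hg, hu₂]
    · intro h hh
      simp only [Finset.mem_filter, Finset.mem_univ, true_and] at hh ⊢
      have h1 : ap u₁⁻¹ y = e := (ap_inv_eq_iff _ _ _).mpr hu₁
      have h2 : ap u₂⁻¹ e = x := (ap_inv_eq_iff _ _ _).mpr hu₂
      rw [ap_mul, ap_mul, h1, hh, h2]
    · intro g _; group
    · intro h _; group
  have hs0pos : 0 < s0 := by
    rw [hs0_def]
    exact Finset.card_pos.mpr ⟨1, Finset.mem_filter.mpr ⟨Finset.mem_univ _, ap_one e⟩⟩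
  have hcardSp : (Finset.univ : Finset (Sp F n)).card = (b - 1) * s0 := by
    have hmaps : ∀ g ∈ (Finset.univ : Finset (Sp F n)),
        ap g e ∈ Finset.univ.erase (0 : Fin n → F × F) :=
      fun g _ => Finset.mem_erase.mpr ⟨ap_ne_zero g he, Finset.mem_univ _⟩
    rw [Finset.card_eq_sum_card_fiberwise hmaps]
    have hfib2 : ∀ x ∈ Finset.univ.erase (0 : Fin n → F × F),
        ((Finset.univ : Finset (Sp F n)).filter fun g => ap g e = x).card = s0 := fun x hx =>
      hfib x e (Finset.mem_erase.mp hx).1 he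
    rw [Finset.sum_congr rfl hfib2, Finset.sum_const, smul_eq_mul,
      Finset.card_erase_of_mem (Finset.mem_univ _), Finset.card_univ, hcardV]
  -- the dual of the base code
  set D0 := (Phi F n).orthogonal (LinearMap.range (emb F (n := n) k)) with hD0_def
  have hrange : Module.finrank F (LinearMap.range (emb F (n := n) k)) = k := by
    rw [LinearMap.finrank_range_of_inj (emb_inj hkn), Module.finrank_fin_fun]
  have hD0rank : Module.finrank F D0 = 2 * n - k := by
    rw [hD0_def, LinearMap.BilinForm.finrank_orthogonal Phi_nondeg, hrange, hrankV]
  have hD0card : Fintype.card D0 = a := by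
    rw [Module.card_eq_pow_finrank (K := F), hD0rank, hF, ha_def]
  set D0nz := (Finset.univ.filter fun y : Fin n → F × F => y ∈ D0).erase 0 with hD0nz_def
  have hD0nzcard : D0nz.card = a - 1 := by
    have h1 : (Finset.univ.filter fun y : Fin n → F × F => y ∈ D0).card = a := by
      rw [← hD0card]
      exact ((Fintype.card_congr (Equiv.refl _)).trans (Fintype.card_subtype _)).symm
    rw [hD0nz_def, Finset.card_erase_of_mem
      (Finset.mem_filter.mpr ⟨Finset.mem_univ _, D0.zero_mem⟩), h1]
  -- membership in the dual of the moved code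
  have hQmem : ∀ (g : Sp F n) (x : Fin n → F × F),
      (∀ v : Fin k → F, sympInner x (ap g (emb F k v)) = 0) ↔ ap g⁻¹ x ∈ D0 := by
    intro g x
    rw [hD0_def, LinearMap.BilinForm.mem_orthogonal_iff]
    constructor
    · intro h c hc
      obtain ⟨v, rfl⟩ := LinearMap.mem_range.mp hc
      show Phi F n (emb F k v) (ap g⁻¹ x) = 0
      rw [Phi_apply, sympInner_anti, neg_eq_zero]
      calc sympInner (ap g⁻¹ x) (emb F k v)
          = sympInner (ap g (ap g⁻¹ x)) (ap g (emb F k v)) := (ap_sympInner _ _ _).symm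
        _ = sympInner x (ap g (emb F k v)) := by rw [ap_ap_inv]
        _ = 0 := h v
    · intro h v
      have h2 : Phi F n (emb F k v) (ap g⁻¹ x) = 0 :=
        h (emb F k v) (LinearMap.mem_range.mpr ⟨v, rfl⟩)
      rw [Phi_apply, sympInner_anti, neg_eq_zero] at h2
      calc sympInner x (ap g (emb F k v))
          = sympInner (ap g (ap g⁻¹ x)) (ap g (emb F k v)) := by rw [ap_ap_inv]
        _ = sympInner (ap g⁻¹ x) (emb F k v) := ap_sympInner _ _ _
        _ = 0 := h2
  -- the double count
  have hTval : (∑ g : Sp F n,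
      (Bad.filter fun x => ∀ v : Fin k → F, sympInner x (ap g (emb F k v)) = 0).card)
      = Bad.card * ((a - 1) * s0) := by
    have step1 : ∀ g : Sp F n,
        (Bad.filter fun x => ∀ v : Fin k → F, sympInner x (ap g (emb F k v)) = 0).card
        = ∑ x ∈ Bad, if (∀ v : Fin k → F, sympInner x (ap g (emb F k v)) = 0) then 1 else 0 :=
      fun g => Finset.card_filter _ _
    rw [Finset.sum_congr rfl fun g _ => step1 g, Finset.sum_comm]
    have step2 : ∀ x ∈ Bad,
        (∑ g : Sp F n, if (∀ v : Fin k → F, sympInner x (ap g (emb F k v)) = 0) then 1 else 0)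
        = (a - 1) * s0 := by
      intro x hx
      have hx0 : x ≠ 0 := (Finset.mem_filter.mp hx).2.1
      rw [← Finset.card_filter]
      have heq : (Finset.univ.filter fun g : Sp F n =>
            ∀ v : Fin k → F, sympInner x (ap g (emb F k v)) = 0)
          = Finset.univ.filter fun g : Sp F n => ap g⁻¹ x ∈ D0 :=
        Finset.filter_congr fun g _ => hQmem g x
      rw [heq]
      have hmaps : ∀ g ∈ (Finset.univ.filter fun g : Sp F n => ap g⁻¹ x ∈ D0),
          ap g⁻¹ x ∈ D0nz := by
        intro g hg
        rw [hD0nz_def]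
        exact Finset.mem_erase.mpr ⟨ap_ne_zero _ hx0,
          Finset.mem_filter.mpr ⟨Finset.mem_univ _, (Finset.mem_filter.mp hg).2⟩⟩
      rw [Finset.card_eq_sum_card_fiberwise hmaps]
      have step3 : ∀ y ∈ D0nz,
          ((Finset.univ.filter fun g : Sp F n => ap g⁻¹ x ∈ D0).filter
            fun g => ap g⁻¹ x = y).card = s0 := by
        intro y hy
        have hy' := Finset.mem_erase.mp (hD0nz_def ▸ hy)
        have hy0 : y ≠ 0 := hy'.1
        have hyD : y ∈ D0 := (Finset.mem_filter.mp hy'.2).2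
        have hflt : ((Finset.univ.filter fun g : Sp F n => ap g⁻¹ x ∈ D0).filter
              fun g => ap g⁻¹ x = y)
            = Finset.univ.filter fun g : Sp F n => ap g y = x := by
          rw [Finset.filter_filter]
          refine Finset.filter_congr fun g _ => ?_
          constructor
          · rintro ⟨_, h2⟩
            exact (ap_inv_eq_iff g x y).mp h2
          · intro h
            have h2 : ap g⁻¹ x = y := (ap_inv_eq_iff g x y).mpr h
            exact ⟨h2 ▸ hyD, h2⟩
        rw [hflt, hfib x y hx0 hy0]
      rw [Finset.sum_congr rfl step3, Finset.sum_const, smul_eq_mul, hD0nzcard]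
    rw [Finset.sum_congr rfl step2, Finset.sum_const, smul_eq_mul]
  have hTlt : (∑ g : Sp F n,
      (Bad.filter fun x => ∀ v : Fin k → F, sympInner x (ap g (emb F k v)) = 0).card)
      < (Finset.univ : Finset (Sp F n)).card := by
    rw [hTval, hcardSp, ← mul_assoc]
    exact (Nat.mul_lt_mul_right hs0pos).mpr hkey
  obtain ⟨g, hg⟩ : ∃ g : Sp F n,
      (Bad.filter fun x => ∀ v : Fin k → F, sympInner x (ap g (emb F k v)) = 0).card = 0 := by
    by_contra hcon
    push_neg at hcon
    have hge : (Finset.univ : Finset (Sp F n)).card ≤ ∑ g : Sp F n,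
        (Bad.filter fun x => ∀ v : Fin k → F, sympInner x (ap g (emb F k v)) = 0).card := by
      calc (Finset.univ : Finset (Sp F n)).card
          = ∑ _g ∈ (Finset.univ : Finset (Sp F n)), 1 := Finset.card_eq_sum_ones _
        _ ≤ _ := Finset.sum_le_sum fun g _ => Nat.one_le_iff_ne_zero.mpr (hcon g)
    omega
  -- the code
  refine ⟨LinearMap.range ((g.1.1 : (Fin n → F × F) →ₗ[F] (Fin n → F × F)) ∘ₗ
    emb F (n := n) k), ?_, ?_, ?_⟩
  · rw [LinearMap.finrank_range_of_inj, Module.finrank_fin_fun]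
    rw [LinearMap.coe_comp]
    exact Function.Injective.comp (ap_inj g) (emb_inj hkn)
  · rintro x hx y hy
    obtain ⟨u, rfl⟩ := LinearMap.mem_range.mp hx
    obtain ⟨v, rfl⟩ := LinearMap.mem_range.mp hy
    show sympInner (ap g (emb F k u)) (ap g (emb F k v)) = 0
    rw [ap_sympInner]
    exact emb_orth u v
  · intro x hx hx0
    by_contra hlt
    push_neg at hlt
    have hxBad : x ∈ Bad := Finset.mem_filter.mpr ⟨Finset.mem_univ _, hx0, hlt⟩
    have hxQ : ∀ v : Fin k → F, sympInner x (ap g (emb F k v)) = 0 := fun v =>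
      hx _ (LinearMap.mem_range.mpr ⟨v, rfl⟩)
    have hmem : x ∈ Bad.filter fun x =>
        ∀ v : Fin k → F, sympInner x (ap g (emb F k v)) = 0 :=
      Finset.mem_filter.mpr ⟨hxBad, hxQ⟩
    rw [Finset.card_eq_zero.mp hg] at hmem
    exact absurd hmem (Finset.notMem_empty x)
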